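/- If two upper semi-continuous, block-decreasing functions $f$ and $g$ on $\mathbb{R}^d$ differ at a point $\m{x}$ in the interior of the support of both, then they differ on a set of positive Lebesgue measure. -/

import Mathlib

open MeasureTheory Set

lemma stmt2_aux (d : ℕ) (f g : (Fin d → ℝ) → ℝ)
    (hfusc : UpperSemicontinuous f)
    (hgdec : ∀ x y, x ≤ y → g y ≤ g x)
    (x : Fin d → ℝ) (h : f x < g x) :
    0 < volume {y | f y ≠ g y} := by
  have hopen : IsOpen {y | f y < g x} :=
    (upperSemicontinuous_iff_isOpen_preimage.mp hfusc) (g x)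
  obtain ⟨ε, hε, hball⟩ := Metric.isOpen_iff.mp hopen x h
  set a : Fin d → ℝ := fun i => x i - ε/2 with ha
  have hsub : Icc a x ⊆ {y | f y ≠ g y} := by
    intro y hy
    have hd : dist y x < ε := by
      have : dist y x ≤ ε/2 := by
        rw [dist_pi_le_iff (by linarith)]
        intro i
        rw [Real.dist_eq, abs_le]
        have h1 := hy.1 i
        have h2 := hy.2 i
        simp only [ha] at h1
        constructor <;> linarith
      linarith
    have h1 : f y < g x := hball hd
    have h2 : g x ≤ g y := hgdec y x hy.2
    exact ne_of_lt (h1.trans_le h2)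
  refine lt_of_lt_of_le ?_ (measure_mono hsub)
  rw [Real.volume_Icc_pi]
  refine CanonicallyOrderedAdd.prod_pos.mpr fun i _ => ?_
  rw [ENNReal.ofReal_pos, ha]
  simp
  linarith

/-- If two upper semi-continuous, block-decreasing functions `f, g` on `ℝ^d`
differ at a point in the interior of the support of both, then they differ on a set of
positive Lebesgue measure. -/
theorem stmt2 (d : ℕ) (f g : (Fin d → ℝ) → ℝ)
    (hf0 : ∀ x, 0 ≤ f x) (hg0 : ∀ x, 0 ≤ g x)
    (hfusc : UpperSemicontinuous f) (hgusc : UpperSemicontinuous g)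
    (hfdec : ∀ x y, x ≤ y → f y ≤ f x) (hgdec : ∀ x y, x ≤ y → g y ≤ g x)
    (x : Fin d → ℝ)
    (hxf : x ∈ interior (closure {y | f y ≠ 0}))
    (hxg : x ∈ interior (closure {y | g y ≠ 0}))
    (hne : f x ≠ g x) :
    0 < volume {y | f y ≠ g y} := by
  rcases lt_or_gt_of_ne hne with h | h
  · exact stmt2_aux d f g hfusc hgdec x h
  · have := stmt2_aux d g f hgusc hfdec x h
    convert this using 2
    ext y
    exact ⟨Ne.symm, Ne.symm⟩
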